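/- arXiv:1210.1433 — 9 statements merged into one kernel-verified Lean document; each statement's English description precedes it below -/
import Mathlib

section
/- Let A and B be preorders and (dB, E, dA) a two-sided discrete fibration from A to B. Define R : B → A → Prop by R b a ↔ ∃ e ∈ E, dB e = b ∧ dA e = a. Then R is a monotone relation from A to B, and R equals the composite (dB)_⋄·(dA)^⋄; concretely, for all a ∈ A, b ∈ B: (∃ e ∈ E, dB e = b ∧ dA e = a) ↔ (∃ e ∈ E, b ≤ dB e ∧ dA e ≤ a). -/
/-- `(dB, E, dA)` is a two-sided discrete fibration from the preorder `A` to
the preorder `B`. -/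
def IsTwoSidedDiscreteFibration {E A B : Type*} [Preorder E] [Preorder A] [Preorder B]
    (dB : E → B) (dA : E → A) : Prop :=
  Monotone dB ∧ Monotone dA ∧
  (∀ (e : E) (b : B), b ≤ dB e → ∃! e' : E, dB e' = b ∧ dA e' = dA e ∧ e' ≤ e) ∧
  (∀ (e : E) (a : A), dA e ≤ a → ∃! e'' : E, dA e'' = a ∧ dB e'' = dB e ∧ e ≤ e'') ∧
  (∀ e e' : E, e ≤ e' → ∃ m : E, dB m = dB e ∧ dA m = dA e' ∧ e ≤ m ∧ m ≤ e')

/-- The relation associated to a two-sided discrete fibration `(dB, E, dA)` is a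
monotone relation from `A` to `B` and equals the composite `(dB)_⋄ · (dA)^⋄`. -/
theorem fibration_to_relation {E A B : Type*} [Preorder E] [Preorder A] [Preorder B]
    (dB : E → B) (dA : E → A)
    (h : IsTwoSidedDiscreteFibration dB dA) :
    (∀ b a, (∃ e : E, dB e = b ∧ dA e = a) →
      ∀ b' : B, b' ≤ b → ∀ a' : A, a ≤ a' → ∃ e : E, dB e = b' ∧ dA e = a') ∧
    (∀ (a : A) (b : B),
      (∃ e : E, dB e = b ∧ dA e = a) ↔ (∃ e : E, b ≤ dB e ∧ dA e ≤ a)) := by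
  obtain ⟨-, -, hcart, hop, -⟩ := h
  constructor
  · rintro b a ⟨e, rfl, rfl⟩ b' hb a' ha
    obtain ⟨e', ⟨hb1, ha1, -⟩, -⟩ := hcart e b' hb
    obtain ⟨e'', ⟨ha2, hb2, -⟩, -⟩ := hop e' a' (ha1 ▸ ha)
    exact ⟨e'', hb2.trans hb1, ha2⟩
  · intro a b
    constructor
    · rintro ⟨e, rfl, rfl⟩
      exact ⟨e, le_refl _, le_refl _⟩
    · rintro ⟨e, hb, ha⟩
      obtain ⟨e', ⟨hb1, ha1, -⟩, -⟩ := hcart e b hb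
      obtain ⟨e'', ⟨ha2, hb2, -⟩, -⟩ := hop e' a (ha1 ▸ ha)
      exact ⟨e'', hb2.trans hb1, ha2⟩
end

section
/- (Composition of fibrations.) Let A, B, C be preorders, (dC, E, dB) a two-sided discrete fibration from B to C, and (dB', F, dA) a two-sided discrete fibration from A to B. Define E⊗F as the set of pairs (c, a) ∈ C × A such that there exist e ∈ E and f ∈ F with dC e = c, dA f = a and dB e = dB' f, equipped with the componentwise order and the two projection maps. Then E⊗F with its projections is a two-sided discrete fibration from A to C, and its associated relation is the composite S·R of the relations S and R associated with E and F: for all c, a, (c, a) ∈ E⊗F ↔ ∃ b ∈ B, R b a ∧ S c b, where R b a ↔ ∃ f ∈ F, dB' f = b ∧ dA f = a and S c b ↔ ∃ e ∈ E, dC e = c ∧ dB e = b. -/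
/-- (Composition of fibrations.)  Given a two-sided discrete fibration
`(dC, E, dB)` from `B` to `C` and a two-sided discrete fibration `(dB', F, dA)`
from `A` to `B`, the set `E ⊗ F` of pairs `(c, a)` admitting a matching pair of
elements of `E` and `F`, ordered componentwise with the two projections, is a
two-sided discrete fibration from `A` to `C`, and its associated relation is
the composite `S · R` of the relations associated with `E` and `F`. -/
theorem composition_of_fibrations {E F A B C : Type*}
    [Preorder E] [Preorder F] [Preorder A] [Preorder B] [Preorder C]
    (dC : E → C) (dB : E → B) (dB' : F → B) (dA : F → A)
    (hE : IsTwoSidedDiscreteFibration dC dB)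
    (hF : IsTwoSidedDiscreteFibration dB' dA) :
    IsTwoSidedDiscreteFibration
      (E := {p : C × A // ∃ (e : E) (f : F), dC e = p.1 ∧ dA f = p.2 ∧ dB e = dB' f})
      (fun q => q.val.1) (fun q => q.val.2) ∧
    (∀ (c : C) (a : A),
      (∃ (e : E) (f : F), dC e = c ∧ dA f = a ∧ dB e = dB' f) ↔
      (∃ b : B, (∃ f : F, dB' f = b ∧ dA f = a) ∧ (∃ e : E, dC e = c ∧ dB e = b))) := by
  obtain ⟨hE1, hE2, hE3, hE4, hE5⟩ := hE
  obtain ⟨hF1, hF2, hF3, hF4, hF5⟩ := hF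
  constructor
  · refine ⟨fun q q' h => h.1, fun q q' h => h.2, ?_, ?_, ?_⟩
    · rintro ⟨⟨c, a⟩, e, f, he, hf, hb⟩ c' hc
      obtain ⟨e', ⟨he'1, he'2, _⟩, _⟩ := hE3 e c' (he ▸ hc)
      refine ⟨⟨(c', a), e', f, he'1, hf, he'2.trans hb⟩,
        ⟨rfl, rfl, hc, le_refl a⟩, ?_⟩
      rintro ⟨⟨c'', a''⟩, _⟩ ⟨h1, h2, _⟩
      exact Subtype.ext (Prod.ext h1 h2)
    · rintro ⟨⟨c, a⟩, e, f, he, hf, hb⟩ a' ha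
      obtain ⟨f', ⟨hf'1, hf'2, _⟩, _⟩ := hF4 f a' (hf ▸ ha)
      refine ⟨⟨(c, a'), e, f', he, hf'1, hb.trans hf'2.symm⟩,
        ⟨rfl, rfl, le_refl c, ha⟩, ?_⟩
      rintro ⟨⟨c'', a''⟩, _⟩ ⟨h1, h2, _⟩
      exact Subtype.ext (Prod.ext h2 h1)
    · rintro ⟨⟨c, a⟩, e, f, he, hf, hb⟩ ⟨⟨c', a'⟩, _⟩ ⟨hc, ha⟩
      obtain ⟨f', ⟨hf'1, hf'2, _⟩, _⟩ := hF4 f a' (hf ▸ ha)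
      exact ⟨⟨(c, a'), e, f', he, hf'1, hb.trans hf'2.symm⟩,
        rfl, rfl, ⟨le_refl c, ha⟩, ⟨hc, le_refl a'⟩⟩
  · intro c a
    constructor
    · rintro ⟨e, f, he, hf, hb⟩
      exact ⟨dB e, ⟨f, hb.symm, hf⟩, ⟨e, he, rfl⟩⟩
    · rintro ⟨b, ⟨f, hf1, hf2⟩, ⟨e, he1, he2⟩⟩
      exact ⟨e, f, he1, hf2, he2.trans hf1.symm⟩
end

section
/- (Pullbacks of fibrations are exact.) Let A, B, C be preorders, (dC, E, dB) a two-sided discrete fibration from B to C, and (dB', F, dA) a two-sided discrete fibration from A to B. Let G = {(e, f) ∈ E × F | dB e = dB' f} with the componentwise order and projections q0 : G → E, q1 : G → F. Then the commutative square (q0, q1, dB, dB'), regarded as a lax square with identity comparison, is exact: for all e ∈ E and f ∈ F, dB e ≤ dB' f ↔ ∃ (e', f') ∈ G with e ≤ e' and f' ≤ f. -/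
/-- (Pullbacks of fibrations are exact.)  Given a two-sided discrete fibration
`(dC, E, dB)` from `B` to `C` and a two-sided discrete fibration `(dB', F, dA)`
from `A` to `B`, the pullback square of `dB` along `dB'`, regarded as a lax
square with identity comparison, is exact. -/
theorem pullback_of_fibrations_exact {E F A B C : Type*}
    [Preorder E] [Preorder F] [Preorder A] [Preorder B] [Preorder C]
    (dC : E → C) (dB : E → B) (dB' : F → B) (dA : F → A)
    (hE : IsTwoSidedDiscreteFibration dC dB)
    (hF : IsTwoSidedDiscreteFibration dB' dA) :
    ∀ (e : E) (f : F),
      dB e ≤ dB' f ↔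
        ∃ g : {p : E × F // dB p.1 = dB' p.2}, e ≤ g.val.1 ∧ g.val.2 ≤ f := by
  intro e f
  constructor
  · intro h
    obtain ⟨e', ⟨hB, hC, hle⟩, _⟩ := hE.2.2.2.1 e (dB' f) h
    exact ⟨⟨(e', f), hB⟩, hle, le_refl f⟩
  · rintro ⟨⟨⟨e', f'⟩, hg⟩, h1, h2⟩
    calc dB e ≤ dB e' := hE.2.1 h1
    _ = dB' f' := hg
    _ ≤ dB' f := hF.1 h2
end

section
/- (Exact squares give absolute left Kan extensions.) Let A, B, X be preorders and j : A → B, h : A → X, l : B → X monotone maps such that h a ≤ l (j a) for all a ∈ A, and suppose the corresponding lax square is exact: for all x ∈ X and b ∈ B, x ≤ l b ↔ ∃ a ∈ A, x ≤ h a ∧ j a ≤ b. Then l is an absolute left Kan extension of h along j: for every preorder X', every monotone m : X → X' and every monotone k : B → X', one has (∀ b ∈ B, m (l b) ≤ k b) if and only if (∀ a ∈ A, m (h a) ≤ k (j a)). In particular (taking m = id), for every monotone k : B → X, (∀ b, l b ≤ k b) ↔ (∀ a, h a ≤ k (j a)). -/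
/-- (Exact squares give absolute left Kan extensions.)  If the lax square with
`p0 = id`, `p1 = j`, bottom `h` and right leg `l` is exact, then `l` is an
absolute left Kan extension of `h` along `j`. -/
theorem exact_gives_absolute_kan {A B X : Type*} [Preorder A] [Preorder B] [Preorder X]
    (j : A → B) (h : A → X) (l : B → X)
    (hj : Monotone j) (hh : Monotone h) (hl : Monotone l)
    (lax : ∀ a : A, h a ≤ l (j a))
    (exact : ∀ (x : X) (b : B), x ≤ l b ↔ ∃ a : A, x ≤ h a ∧ j a ≤ b) :
    (∀ (X' : Type*) [Preorder X'] (m : X → X') (k : B → X'),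
        Monotone m → Monotone k →
        ((∀ b : B, m (l b) ≤ k b) ↔ ∀ a : A, m (h a) ≤ k (j a))) ∧
    (∀ k : B → X, Monotone k →
        ((∀ b : B, l b ≤ k b) ↔ ∀ a : A, h a ≤ k (j a))) := by
  constructor
  · intro X' _ m k hm hk
    constructor
    · intro H a
      exact le_trans (hm (lax a)) (H (j a))
    · intro H b
      obtain ⟨a, hlb, hjb⟩ := (exact (l b) b).mp le_rfl
      exact le_trans (hm hlb) (le_trans (H a) (hk hjb))
  · intro k hk
    constructor
    · intro H a
      exact le_trans (lax a) (H (j a))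
    · intro H b
      obtain ⟨a, hlb, hjb⟩ := (exact (l b) b).mp le_rfl
      exact le_trans hlb (le_trans (H a) (hk hjb))
end

section
/- Let P, A, B, C be partial orders and p0 : P → A, p1 : P → B, f : A → C, g : B → C monotone maps with f (p0 w) ≤ g (p1 w) for all w ∈ P. Suppose f and p1 are left adjoints, i.e., there are monotone maps f^r : C → A and p1^r : B → P with Galois connections f ⊣ f^r and p1 ⊣ p1^r. Then the lax square (p0, p1, f, g) is exact if and only if p0 ∘ p1^r = f^r ∘ g. -/
/-- A lax square of partial orders in which `f` and `p1` are left adjoints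
(with right adjoints `fr` and `p1r`) is exact iff `p0 ∘ p1r = fr ∘ g`. -/
theorem exact_iff_mate_equality {P A B C : Type*}
    [PartialOrder P] [PartialOrder A] [PartialOrder B] [PartialOrder C]
    (p0 : P → A) (p1 : P → B) (f : A → C) (g : B → C)
    (hp0 : Monotone p0) (hp1 : Monotone p1) (hf : Monotone f) (hg : Monotone g)
    (lax : ∀ w : P, f (p0 w) ≤ g (p1 w))
    (fr : C → A) (p1r : B → P)
    (hfr : Monotone fr) (hp1r : Monotone p1r)
    (gcf : ∀ (a : A) (c : C), f a ≤ c ↔ a ≤ fr c)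
    (gcp : ∀ (w : P) (b : B), p1 w ≤ b ↔ w ≤ p1r b) :
    (∀ (a : A) (b : B), f a ≤ g b ↔ ∃ w : P, a ≤ p0 w ∧ p1 w ≤ b) ↔
    p0 ∘ p1r = fr ∘ g := by
  constructor
  · intro hex
    funext b
    have hcounit : p1 (p1r b) ≤ b := (gcp (p1r b) b).mpr le_rfl
    apply le_antisymm
    · exact (gcf _ _).mp ((lax (p1r b)).trans (hg hcounit))
    · have : f (fr (g b)) ≤ g b := (gcf _ _).mpr le_rfl
      obtain ⟨w, hw1, hw2⟩ := (hex (fr (g b)) b).mp this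
      exact hw1.trans (hp0 ((gcp w b).mp hw2))
  · intro heq a b
    constructor
    · intro h
      refine ⟨p1r b, ?_, (gcp (p1r b) b).mpr le_rfl⟩
      have := (gcf a (g b)).mp h
      calc a ≤ fr (g b) := this
        _ = p0 (p1r b) := (congrFun heq b).symm
    · rintro ⟨w, hw1, hw2⟩
      exact ((hf hw1).trans (lax w)).trans (hg hw2)
end

section
/- Let T : Preord ⥤ Preord be a locally monotone functor. Then the following are equivalent: (1) T preserves exact lax squares (for every exact lax square, its image under T is an exact lax square); (2) T preserves strict exact squares (exact lax squares in which f ∘ p0 = g ∘ p1) and, for every preorder A, T sends the comma square of the identity on A — the square with vertex P = {(a, a') ∈ A × A | a ≤ a'} with componentwise order, the two projections P → A, and both legs id_A — to an exact lax square. (Likewise these are equivalent to: T preserves strict exact squares and exactness of all comma squares f/1 and 1/f, and to: T preserves strict exact squares and exactness of all comma squares.) -/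
open CategoryTheory

/-- Exactness of a (lax) square of preorders, given by bundled monotone maps. -/
def IsExactSq {P A B C : Preord} (p0 : P ⟶ A) (p1 : P ⟶ B) (f : A ⟶ C) (g : B ⟶ C) : Prop :=
  ∀ (a : ↥A) (b : ↥B), f.hom.toFun a ≤ g.hom.toFun b ↔ ∃ w : ↥P, a ≤ p0.hom.toFun w ∧ p1.hom.toFun w ≤ b

/-- A functor `T : Preord ⥤ Preord` is locally monotone. -/
def LocallyMonotone (T : Preord ⥤ Preord) : Prop :=
  ∀ (X Y : Preord) (f g : X ⟶ Y), (∀ x : ↥X, f.hom.toFun x ≤ g.hom.toFun x) →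
    ∀ ξ : ↥(T.obj X), (T.map f).hom.toFun ξ ≤ (T.map g).hom.toFun ξ

/-- The vertex of the comma square `f/g`: pairs `(a, b)` with `f a ≤ g b`,
ordered componentwise. -/
def commaObj {A B C : Preord} (f : A ⟶ C) (g : B ⟶ C) : Preord :=
  Preord.of {p : ↥A × ↥B // f.hom.toFun p.1 ≤ g.hom.toFun p.2}

/-- First projection of the comma square `f/g`. -/
def commaFst {A B C : Preord} (f : A ⟶ C) (g : B ⟶ C) : commaObj f g ⟶ A :=
  Preord.ofHom ((⟨Prod.fst, fun _ _ h => h.1⟩ : OrderHom (↥A × ↥B) ↥A).comp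
    (⟨Subtype.val, fun _ _ h => h⟩ :
      OrderHom {p : ↥A × ↥B // f.hom.toFun p.1 ≤ g.hom.toFun p.2} (↥A × ↥B)))

/-- Second projection of the comma square `f/g`. -/
def commaSnd {A B C : Preord} (f : A ⟶ C) (g : B ⟶ C) : commaObj f g ⟶ B :=
  Preord.ofHom ((⟨Prod.snd, fun _ _ h => h.2⟩ : OrderHom (↥A × ↥B) ↥B).comp
    (⟨Subtype.val, fun _ _ h => h⟩ :
      OrderHom {p : ↥A × ↥B // f.hom.toFun p.1 ≤ g.hom.toFun p.2} (↥A × ↥B)))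

/-- `T` preserves exact lax squares. -/
def PreservesExactLaxSquares (T : Preord ⥤ Preord) : Prop :=
  ∀ (P A B C : Preord) (p0 : P ⟶ A) (p1 : P ⟶ B) (f : A ⟶ C) (g : B ⟶ C),
    (∀ w : ↥P, f.hom.toFun (p0.hom.toFun w) ≤ g.hom.toFun (p1.hom.toFun w)) →
    IsExactSq p0 p1 f g →
    IsExactSq (T.map p0) (T.map p1) (T.map f) (T.map g)

/-- `T` preserves strict exact squares (exact lax squares with commuting
underlying square). -/
def PreservesStrictExactSquares (T : Preord ⥤ Preord) : Prop :=
  ∀ (P A B C : Preord) (p0 : P ⟶ A) (p1 : P ⟶ B) (f : A ⟶ C) (g : B ⟶ C),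
    (∀ w : ↥P, f.hom.toFun (p0.hom.toFun w) = g.hom.toFun (p1.hom.toFun w)) →
    IsExactSq p0 p1 f g →
    IsExactSq (T.map p0) (T.map p1) (T.map f) (T.map g)

/-- `T` sends the comma square of `f : A ⟶ C` and `g : B ⟶ C` to an exact
square. -/
def PreservesCommaSquare (T : Preord ⥤ Preord) {A B C : Preord}
    (f : A ⟶ C) (g : B ⟶ C) : Prop :=
  IsExactSq (T.map (commaFst f g)) (T.map (commaSnd f g)) (T.map f) (T.map g)
section Aux

variable {A B C : Preord}

/-- The map `f/1 → 1/1` sending `(a, c)` to `(f a, c)`. -/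
def toW (f : A ⟶ C) : commaObj f (𝟙 C) ⟶ commaObj (𝟙 C) (𝟙 C) :=
  Preord.ofHom (⟨fun q => ⟨(f.hom.toFun q.val.1, q.val.2), q.property⟩,
    fun _ _ h => ⟨f.hom.monotone h.1, h.2⟩⟩ :
    OrderHom {p : ↥A × ↥C // f.hom.toFun p.1 ≤ (𝟙 C : C ⟶ C).hom.toFun p.2}
      {p : ↥C × ↥C // (𝟙 C : C ⟶ C).hom.toFun p.1 ≤ (𝟙 C : C ⟶ C).hom.toFun p.2})

/-- The map `1/f → 1/1` sending `(c, a)` to `(c, f a)`. -/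
def toW' (f : A ⟶ C) : commaObj (𝟙 C) f ⟶ commaObj (𝟙 C) (𝟙 C) :=
  Preord.ofHom (⟨fun q => ⟨(q.val.1, f.hom.toFun q.val.2), q.property⟩,
    fun _ _ h => ⟨h.1, f.hom.monotone h.2⟩⟩ :
    OrderHom {p : ↥C × ↥A // (𝟙 C : C ⟶ C).hom.toFun p.1 ≤ f.hom.toFun p.2}
      {p : ↥C × ↥C // (𝟙 C : C ⟶ C).hom.toFun p.1 ≤ (𝟙 C : C ⟶ C).hom.toFun p.2})

/-- The map `f/g → 1/g` sending `(a, b)` to `(f a, b)`. -/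
def toOne (f : A ⟶ C) (g : B ⟶ C) : commaObj f g ⟶ commaObj (𝟙 C) g :=
  Preord.ofHom (⟨fun q => ⟨(f.hom.toFun q.val.1, q.val.2), q.property⟩,
    fun _ _ h => ⟨f.hom.monotone h.1, h.2⟩⟩ :
    OrderHom {p : ↥A × ↥B // f.hom.toFun p.1 ≤ g.hom.toFun p.2}
      {p : ↥C × ↥B // (𝟙 C : C ⟶ C).hom.toFun p.1 ≤ g.hom.toFun p.2})

lemma toW_snd (f : A ⟶ C) : toW f ≫ commaSnd (𝟙 C) (𝟙 C) = commaSnd f (𝟙 C) := rfl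

lemma toW'_fst (f : A ⟶ C) : toW' f ≫ commaFst (𝟙 C) (𝟙 C) = commaFst (𝟙 C) f := rfl

lemma toOne_snd (f : A ⟶ C) (g : B ⟶ C) :
    toOne f g ≫ commaSnd (𝟙 C) g = commaSnd f g := rfl

/-- Comma squares are lax. -/
lemma comma_lax (f : A ⟶ C) (g : B ⟶ C) :
    ∀ w : ↥(commaObj f g),
      f.hom.toFun ((commaFst f g).hom.toFun w) ≤ g.hom.toFun ((commaSnd f g).hom.toFun w) :=
  fun w => w.property

/-- Comma squares are exact. -/
lemma comma_exact (f : A ⟶ C) (g : B ⟶ C) :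
    IsExactSq (commaFst f g) (commaSnd f g) f g := by
  intro a b
  constructor
  · intro h
    exact ⟨⟨(a, b), h⟩, le_refl a, le_refl b⟩
  · rintro ⟨w, h1, h2⟩
    exact le_trans (f.hom.monotone h1) (le_trans w.property (g.hom.monotone h2))

lemma toW_exact (f : A ⟶ C) :
    IsExactSq (commaFst f (𝟙 C)) (toW f) f (commaFst (𝟙 C) (𝟙 C)) := by
  intro a w
  constructor
  · intro h
    exact ⟨⟨(a, w.val.2), le_trans h w.property⟩, le_refl a, ⟨h, le_refl _⟩⟩
  · rintro ⟨q, h1, h2⟩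
    exact le_trans (f.hom.monotone h1) h2.1

lemma toW'_exact (f : A ⟶ C) :
    IsExactSq (toW' f) (commaSnd (𝟙 C) f) (commaSnd (𝟙 C) (𝟙 C)) f := by
  intro w a
  constructor
  · intro h
    exact ⟨⟨(w.val.1, a), le_trans w.property h⟩, ⟨le_refl _, h⟩, le_refl a⟩
  · rintro ⟨q, h1, h2⟩
    exact le_trans h1.2 (f.hom.monotone h2)

lemma toOne_exact (f : A ⟶ C) (g : B ⟶ C) :
    IsExactSq (commaFst f g) (toOne f g) f (commaFst (𝟙 C) g) := by
  intro a v
  constructor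
  · intro h
    exact ⟨⟨(a, v.val.2), le_trans h v.property⟩, le_refl a, ⟨h, le_refl _⟩⟩
  · rintro ⟨q, h1, h2⟩
    exact le_trans (f.hom.monotone h1) h2.1

/-- Backward direction of exactness for the image of any lax square. -/
lemma lax_image (T : Preord ⥤ Preord) (hT : LocallyMonotone T) {P : Preord}
    (p0 : P ⟶ A) (p1 : P ⟶ B) (f : A ⟶ C) (g : B ⟶ C)
    (lax : ∀ w : ↥P, f.hom.toFun (p0.hom.toFun w) ≤ g.hom.toFun (p1.hom.toFun w))
    (ξ : ↥(T.obj A)) (η : ↥(T.obj B)) (ω : ↥(T.obj P))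
    (h1 : ξ ≤ (T.map p0).hom.toFun ω) (h2 : (T.map p1).hom.toFun ω ≤ η) :
    (T.map f).hom.toFun ξ ≤ (T.map g).hom.toFun η := by
  calc (T.map f).hom.toFun ξ ≤ (T.map f).hom.toFun ((T.map p0).hom.toFun ω) := (T.map f).hom.monotone h1
    _ = (T.map (p0 ≫ f)).hom.toFun ω := by rw [T.map_comp]; rfl
    _ ≤ (T.map (p1 ≫ g)).hom.toFun ω := hT P C (p0 ≫ f) (p1 ≫ g) lax ω
    _ = (T.map g).hom.toFun ((T.map p1).hom.toFun ω) := by rw [T.map_comp]; rfl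
    _ ≤ (T.map g).hom.toFun η := (T.map g).hom.monotone h2

end Aux

section Res

variable {P A B C : Preord} (p0 : P ⟶ A) (p1 : P ⟶ B) (f : A ⟶ C) (g : B ⟶ C)

/-- The vertex of the restriction square: pairs `(q, w)` with `q₁ ≤ p₀ w` and
`p₁ w ≤ q₂`. -/
def resObj : Preord :=
  Preord.of {v : ↥(commaObj f g) × ↥P //
    v.1.val.1 ≤ p0.hom.toFun v.2 ∧ p1.hom.toFun v.2 ≤ v.1.val.2}

def resFst : resObj p0 p1 f g ⟶ commaObj f g :=
  Preord.ofHom (⟨fun v => v.val.1, fun _ _ h => h.1⟩ :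
    OrderHom {v : ↥(commaObj f g) × ↥P //
      v.1.val.1 ≤ p0.hom.toFun v.2 ∧ p1.hom.toFun v.2 ≤ v.1.val.2} ↥(commaObj f g))

def resSnd : resObj p0 p1 f g ⟶ P :=
  Preord.ofHom (⟨fun v => v.val.2, fun _ _ h => h.2⟩ :
    OrderHom {v : ↥(commaObj f g) × ↥P //
      v.1.val.1 ≤ p0.hom.toFun v.2 ∧ p1.hom.toFun v.2 ≤ v.1.val.2} ↥P)

lemma res_exact (hex : IsExactSq p0 p1 f g) :
    IsExactSq (resFst p0 p1 f g) (resFst p0 p1 f g)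
      (𝟙 (commaObj f g)) (𝟙 (commaObj f g)) := by
  intro q q'
  constructor
  · intro h
    obtain ⟨w, hw1, hw2⟩ := (hex q.val.1 q.val.2).mp q.property
    exact ⟨⟨(q, w), hw1, hw2⟩, le_refl q, h⟩
  · rintro ⟨v, h1, h2⟩
    exact le_trans h1 h2

end Res


/-- For a locally monotone functor `T : Preord ⥤ Preord` the following are
equivalent: (1) `T` preserves exact lax squares; (2) `T` preserves strict
exact squares and the exactness of the comma squares `1_A/1_A`; (3) `T`
preserves strict exact squares and the exactness of the comma squares `f/1`
and `1/f`; (4) `T` preserves strict exact squares and the exactness of all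
comma squares. -/
theorem BCC_characterization (T : Preord ⥤ Preord) (hT : LocallyMonotone T) :
    [PreservesExactLaxSquares T,
     PreservesStrictExactSquares T ∧ (∀ A : Preord, PreservesCommaSquare T (𝟙 A) (𝟙 A)),
     PreservesStrictExactSquares T ∧
       (∀ (A B : Preord) (f : A ⟶ B),
         PreservesCommaSquare T f (𝟙 B) ∧ PreservesCommaSquare T (𝟙 B) f),
     PreservesStrictExactSquares T ∧
       (∀ (A B C : Preord) (f : A ⟶ C) (g : B ⟶ C), PreservesCommaSquare T f g)].TFAE := by

  tfae_have 1 → 2 := by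
    intro h1
    refine ⟨fun P A B C p0 p1 f g hs hex =>
      h1 P A B C p0 p1 f g (fun w => le_of_eq (hs w)) hex, fun A => ?_⟩
    exact h1 _ _ _ _ _ _ _ _ (comma_lax (𝟙 A) (𝟙 A)) (comma_exact (𝟙 A) (𝟙 A))
  tfae_have 2 → 3 := by
    rintro ⟨hs, hW⟩
    refine ⟨hs, fun A B f => ⟨?_, ?_⟩⟩
    · -- the comma square f/1
      intro ξ γ
      constructor
      · intro h
        have h' : (T.map (𝟙 B)).hom.toFun ((T.map f).hom.toFun ξ) ≤ (T.map (𝟙 B)).hom.toFun γ := by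
          simpa [CategoryTheory.Functor.map_id] using h
        obtain ⟨ω, hω1, hω2⟩ := (hW B ((T.map f).hom.toFun ξ) γ).mp h'
        obtain ⟨ρ, hρ1, hρ2⟩ :=
          (hs _ _ _ _ (commaFst f (𝟙 B)) (toW f) f (commaFst (𝟙 B) (𝟙 B))
            (fun q => rfl) (toW_exact f) ξ ω).mp hω1
        refine ⟨ρ, hρ1, ?_⟩
        have h2 : (T.map (commaSnd f (𝟙 B))).hom.toFun ρ ≤ γ := by
          rw [← toW_snd f, T.map_comp]
          exact le_trans ((T.map (commaSnd (𝟙 B) (𝟙 B))).hom.monotone hρ2) hω2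
        simpa [CategoryTheory.Functor.map_id] using h2
      · rintro ⟨ω, h1, h2⟩
        exact lax_image T hT _ _ _ _ (comma_lax f (𝟙 B)) ξ γ ω h1 h2
    · -- the comma square 1/f
      intro γ η
      constructor
      · intro h
        have h' : (T.map (𝟙 B)).hom.toFun γ ≤ (T.map (𝟙 B)).hom.toFun ((T.map f).hom.toFun η) := by
          simpa [CategoryTheory.Functor.map_id] using h
        obtain ⟨ω, hω1, hω2⟩ := (hW B γ ((T.map f).hom.toFun η)).mp h'
        obtain ⟨ρ, hρ1, hρ2⟩ :=
          (hs _ _ _ _ (toW' f) (commaSnd (𝟙 B) f) (commaSnd (𝟙 B) (𝟙 B)) f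
            (fun q => rfl) (toW'_exact f) ω η).mp hω2
        refine ⟨ρ, ?_, hρ2⟩
        rw [← toW'_fst f, T.map_comp]
        exact le_trans hω1 ((T.map (commaFst (𝟙 B) (𝟙 B))).hom.monotone hρ1)
      · rintro ⟨ω, h1, h2⟩
        exact lax_image T hT _ _ _ _ (comma_lax (𝟙 B) f) γ η ω h1 h2
  tfae_have 3 → 4 := by
    rintro ⟨hs, hc⟩
    refine ⟨hs, fun A B C f g => ?_⟩
    intro ξ η
    constructor
    · intro h
      have h' : (T.map (𝟙 C)).hom.toFun ((T.map f).hom.toFun ξ) ≤ (T.map g).hom.toFun η := by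
        simpa [CategoryTheory.Functor.map_id] using h
      obtain ⟨ρ, hρ1, hρ2⟩ := ((hc B C g).2 ((T.map f).hom.toFun ξ) η).mp h'
      obtain ⟨σ, hσ1, hσ2⟩ :=
        (hs _ _ _ _ (commaFst f g) (toOne f g) f (commaFst (𝟙 C) g)
          (fun q => rfl) (toOne_exact f g) ξ ρ).mp hρ1
      refine ⟨σ, hσ1, ?_⟩
      rw [← toOne_snd f g, T.map_comp]
      exact le_trans ((T.map (commaSnd (𝟙 C) g)).hom.monotone hσ2) hρ2
    · rintro ⟨ω, h1, h2⟩
      exact lax_image T hT _ _ _ _ (comma_lax f g) ξ η ω h1 h2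
  tfae_have 4 → 1 := by
    rintro ⟨hs, hc⟩
    intro P A B C p0 p1 f g lax hex ξ η
    constructor
    · intro h
      obtain ⟨σ, hσ1, hσ2⟩ := (hc A B C f g ξ η).mp h
      obtain ⟨τ, hτ1, hτ2⟩ :=
        (hs _ _ _ _ (resFst p0 p1 f g) (resFst p0 p1 f g)
          (𝟙 (commaObj f g)) (𝟙 (commaObj f g)) (fun v => rfl)
          (res_exact p0 p1 f g hex) σ σ).mp (le_refl _)
      refine ⟨(T.map (resSnd p0 p1 f g)).hom.toFun τ, ?_, ?_⟩
      · calc ξ ≤ (T.map (commaFst f g)).hom.toFun σ := hσ1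
          _ ≤ (T.map (commaFst f g)).hom.toFun ((T.map (resFst p0 p1 f g)).hom.toFun τ) :=
            (T.map (commaFst f g)).hom.monotone hτ1
          _ = (T.map (resFst p0 p1 f g ≫ commaFst f g)).hom.toFun τ := by rw [T.map_comp]; rfl
          _ ≤ (T.map (resSnd p0 p1 f g ≫ p0)).hom.toFun τ :=
            hT (resObj p0 p1 f g) A (resFst p0 p1 f g ≫ commaFst f g)
              (resSnd p0 p1 f g ≫ p0) (fun v => v.property.1) τ
          _ = (T.map p0).hom.toFun ((T.map (resSnd p0 p1 f g)).hom.toFun τ) := by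
            rw [T.map_comp]; rfl
      · calc (T.map p1).hom.toFun ((T.map (resSnd p0 p1 f g)).hom.toFun τ)
            = (T.map (resSnd p0 p1 f g ≫ p1)).hom.toFun τ := by rw [T.map_comp]; rfl
          _ ≤ (T.map (resFst p0 p1 f g ≫ commaSnd f g)).hom.toFun τ :=
            hT (resObj p0 p1 f g) B (resSnd p0 p1 f g ≫ p1)
              (resFst p0 p1 f g ≫ commaSnd f g) (fun v => v.property.2) τ
          _ = (T.map (commaSnd f g)).hom.toFun ((T.map (resFst p0 p1 f g)).hom.toFun τ) := by
            rw [T.map_comp]; rfl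
          _ ≤ (T.map (commaSnd f g)).hom.toFun σ := (T.map (commaSnd f g)).hom.monotone hτ2
          _ ≤ η := hσ2
    · rintro ⟨ω, h1, h2⟩
      exact lax_image T hT _ _ _ _ lax ξ η ω h1 h2
  tfae_finish
end

section
/- (The powerset functor satisfies the Beck-Chevalley Condition.) Let P, A, B, C be preorders and p0 : P → A, p1 : P → B, f : A → C, g : B → C monotone maps forming an exact lax square. Then for all subsets S ⊆ A and T ⊆ B: (f '' S) ≤EM (g '' T) in C if and only if there exists W ⊆ P with S ≤EM (p0 '' W) in A and (p1 '' W) ≤EM T in B. (This says the image of the square under the powerset functor with the Egli-Milner preorder is again exact.) -/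
/-- (The powerset functor satisfies the Beck-Chevalley Condition.)  The image
of an exact lax square under the powerset functor, with the Egli-Milner
preorder, is again exact. -/
theorem powerset_BCC {P A B C : Type*}
    [Preorder P] [Preorder A] [Preorder B] [Preorder C]
    (p0 : P → A) (p1 : P → B) (f : A → C) (g : B → C)
    (hp0 : Monotone p0) (hp1 : Monotone p1) (hf : Monotone f) (hg : Monotone g)
    (lax : ∀ w : P, f (p0 w) ≤ g (p1 w))
    (exact : ∀ (a : A) (b : B), f a ≤ g b ↔ ∃ w : P, a ≤ p0 w ∧ p1 w ≤ b) :
    ∀ (S : Set A) (T : Set B),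
      ((∀ c ∈ f '' S, ∃ c' ∈ g '' T, c ≤ c') ∧ (∀ c' ∈ g '' T, ∃ c ∈ f '' S, c ≤ c')) ↔
      ∃ W : Set P,
        ((∀ a ∈ S, ∃ a' ∈ p0 '' W, a ≤ a') ∧ (∀ a' ∈ p0 '' W, ∃ a ∈ S, a ≤ a')) ∧
        ((∀ b ∈ p1 '' W, ∃ b' ∈ T, b ≤ b') ∧ (∀ b' ∈ T, ∃ b ∈ p1 '' W, b ≤ b')) := by
  intro S T
  constructor
  · rintro ⟨h1, h2⟩
    refine ⟨{w | (∃ a ∈ S, a ≤ p0 w) ∧ (∃ b ∈ T, p1 w ≤ b)}, ⟨?_, ?_⟩, ?_, ?_⟩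
    · intro a ha
      obtain ⟨c', ⟨b, hb, rfl⟩, hle⟩ := h1 (f a) ⟨a, ha, rfl⟩
      obtain ⟨w, hw1, hw2⟩ := (exact a b).mp hle
      exact ⟨p0 w, ⟨w, ⟨⟨a, ha, hw1⟩, ⟨b, hb, hw2⟩⟩, rfl⟩, hw1⟩
    · rintro a' ⟨w, ⟨⟨a, ha, haw⟩, _⟩, rfl⟩
      exact ⟨a, ha, haw⟩
    · rintro b ⟨w, ⟨_, ⟨b', hb', hwb⟩⟩, rfl⟩
      exact ⟨b', hb', hwb⟩
    · intro b hb
      obtain ⟨c, ⟨a, ha, rfl⟩, hle⟩ := h2 (g b) ⟨b, hb, rfl⟩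
      obtain ⟨w, hw1, hw2⟩ := (exact a b).mp hle
      exact ⟨p1 w, ⟨w, ⟨⟨a, ha, hw1⟩, ⟨b, hb, hw2⟩⟩, rfl⟩, hw2⟩
  · rintro ⟨W, ⟨hS1, hS2⟩, hT1, hT2⟩
    constructor
    · rintro c ⟨a, ha, rfl⟩
      obtain ⟨a', ⟨w, hw, rfl⟩, haw⟩ := hS1 a ha
      obtain ⟨b, hb, hwb⟩ := hT1 (p1 w) ⟨w, hw, rfl⟩
      exact ⟨g b, ⟨b, hb, rfl⟩, le_trans (hf haw) (le_trans (lax w) (hg hwb))⟩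
    · rintro c' ⟨b, hb, rfl⟩
      obtain ⟨b', ⟨w, hw, rfl⟩, hwb⟩ := hT2 b hb
      obtain ⟨a, ha, haw⟩ := hS2 (p0 w) ⟨w, hw, rfl⟩
      exact ⟨f a, ⟨a, ha, rfl⟩, le_trans (hf haw) (le_trans (lax w) (hg hwb))⟩
end

section
/- (The lowerset functor satisfies the Beck-Chevalley Condition.) Let P, A, B, C be preorders and p0 : P → A, p1 : P → B, f : A → C, g : B → C monotone maps forming an exact lax square. Then for every lower set V ⊆ A and every lower set W ⊆ B: (∀ a ∈ V, ∃ b ∈ W, f a ≤ g b) if and only if there exists a lower set U ⊆ P such that (∀ a ∈ V, ∃ u ∈ U, a ≤ p0 u) and (∀ u ∈ U, ∃ b ∈ W, p1 u ≤ b). -/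
/-- (The lowerset functor satisfies the Beck-Chevalley Condition.)  The image
of an exact lax square under the lowerset functor is again exact. -/
theorem lowerset_BCC {P A B C : Type*}
    [Preorder P] [Preorder A] [Preorder B] [Preorder C]
    (p0 : P → A) (p1 : P → B) (f : A → C) (g : B → C)
    (hp0 : Monotone p0) (hp1 : Monotone p1) (hf : Monotone f) (hg : Monotone g)
    (lax : ∀ w : P, f (p0 w) ≤ g (p1 w))
    (exact : ∀ (a : A) (b : B), f a ≤ g b ↔ ∃ w : P, a ≤ p0 w ∧ p1 w ≤ b) :
    ∀ V : Set A, IsLowerSet V → ∀ W : Set B, IsLowerSet W →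
      ((∀ a ∈ V, ∃ b ∈ W, f a ≤ g b) ↔
        ∃ U : Set P, IsLowerSet U ∧
          (∀ a ∈ V, ∃ u ∈ U, a ≤ p0 u) ∧ (∀ u ∈ U, ∃ b ∈ W, p1 u ≤ b)) := by
  intro V hV W hW
  constructor
  · intro h
    refine ⟨p1 ⁻¹' W, fun u v huv hv => hW (hp1 huv) hv, ?_, fun u hu => ⟨p1 u, hu, le_refl _⟩⟩
    intro a ha
    obtain ⟨b, hb, hab⟩ := h a ha
    obtain ⟨w, hw0, hw1⟩ := (exact a b).mp hab
    exact ⟨w, hW hw1 hb, hw0⟩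
  · rintro ⟨U, hU, h1, h2⟩ a ha
    obtain ⟨u, hu, hau⟩ := h1 a ha
    obtain ⟨b, hb, hub⟩ := h2 u hu
    exact ⟨b, hb, le_trans (hf hau) (le_trans (lax u) (hg hub))⟩
end

section
/- (Egli-Milner description of the convex powerset lifting.) Let A and B be partial orders and R a monotone relation from A to B. Let E = {(b, a) ∈ B × A | R b a} with the componentwise order and projections dB : E → B, dA : E → A. Then for all order-convex subsets S ⊆ B and T ⊆ A the following are equivalent: (1) there exists an order-convex subset W ⊆ E with S ≤EM (dB '' W) in B and (dA '' W) ≤EM T in A; (2) (∀ a ∈ T, ∃ b ∈ S, R b a) and (∀ b ∈ S, ∃ a ∈ T, R b a). -/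
/-- (Egli-Milner description of the convex powerset lifting.)  Let `R` be a
monotone relation from a poset `A` to a poset `B`, with associated two-sided
discrete fibration vertex `E = {(b, a) | R b a}` and projections `dB`, `dA`.
For order-convex `S ⊆ B` and `T ⊆ A`, the lifted relation relates `S` and `T`
iff the Egli-Milner-style condition holds. -/
theorem convex_powerset_lifting_egli_milner {A B : Type*}
    [PartialOrder A] [PartialOrder B]
    (R : B → A → Prop)
    (hR : ∀ b a, R b a → ∀ b' : B, b' ≤ b → ∀ a' : A, a ≤ a' → R b' a') :
    ∀ S : Set B, S.OrdConnected → ∀ T : Set A, T.OrdConnected →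
      ((∃ W : Set {p : B × A // R p.1 p.2}, W.OrdConnected ∧
          ((∀ b ∈ S, ∃ b' ∈ (fun e => e.val.1) '' W, b ≤ b') ∧
           (∀ b' ∈ (fun e : {p : B × A // R p.1 p.2} => e.val.1) '' W, ∃ b ∈ S, b ≤ b')) ∧
          ((∀ a ∈ (fun e : {p : B × A // R p.1 p.2} => e.val.2) '' W, ∃ a' ∈ T, a ≤ a') ∧
           (∀ a' ∈ T, ∃ a ∈ (fun e : {p : B × A // R p.1 p.2} => e.val.2) '' W, a ≤ a'))) ↔
        ((∀ a ∈ T, ∃ b ∈ S, R b a) ∧ (∀ b ∈ S, ∃ a ∈ T, R b a))) := by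
  intro S _hS T _hT
  constructor
  · rintro ⟨W, -, ⟨hB1, hB2⟩, ⟨hA1, hA2⟩⟩
    constructor
    · intro a ha
      obtain ⟨a', ⟨e, heW, rfl⟩, hle⟩ := hA2 a ha
      obtain ⟨b, hbS, hble⟩ := hB2 e.val.1 ⟨e, heW, rfl⟩
      exact ⟨b, hbS, hR e.val.1 e.val.2 e.prop b hble a hle⟩
    · intro b hb
      obtain ⟨b', ⟨e, heW, rfl⟩, hble⟩ := hB1 b hb
      obtain ⟨a', ha'T, hle⟩ := hA1 e.val.2 ⟨e, heW, rfl⟩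
      exact ⟨a', ha'T, hR e.val.1 e.val.2 e.prop b hble a' hle⟩
  · rintro ⟨h1, h2⟩
    refine ⟨{e | (∃ b ∈ S, b ≤ e.val.1) ∧ (∃ a ∈ T, e.val.2 ≤ a)}, ?_, ⟨?_, ?_⟩, ?_, ?_⟩
    · constructor
      intro x hx y hy z hz
      exact ⟨⟨hx.1.choose, hx.1.choose_spec.1,
          le_trans hx.1.choose_spec.2 hz.1.1⟩,
        ⟨hy.2.choose, hy.2.choose_spec.1, le_trans hz.2.2 hy.2.choose_spec.2⟩⟩
    · intro b hb
      obtain ⟨a, haT, hRba⟩ := h2 b hb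
      exact ⟨b, ⟨⟨(b, a), hRba⟩, ⟨⟨b, hb, le_refl b⟩, ⟨a, haT, le_refl a⟩⟩, rfl⟩, le_refl b⟩
    · rintro b' ⟨e, ⟨⟨b, hbS, hble⟩, -⟩, rfl⟩
      exact ⟨b, hbS, hble⟩
    · rintro a ⟨e, ⟨-, ⟨a', ha'T, hle⟩⟩, rfl⟩
      exact ⟨a', ha'T, hle⟩
    · intro a haT
      obtain ⟨b, hbS, hRba⟩ := h1 a haT
      exact ⟨a, ⟨⟨(b, a), hRba⟩, ⟨⟨b, hbS, le_refl b⟩, ⟨a, haT, le_refl a⟩⟩, rfl⟩, le_refl a⟩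
end
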